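/- Let g : Δ → ℂ be holomorphic with Re g(z) ≥ 0 for all z ∈ Δ, and let (z_k) be a sequence in Δ converging to 1 nontangentially such that Re g(z_k) = o(|z_k - 1|) as k → ∞ (i.e. Re g(z_k)/|z_k - 1| → 0). Then Re g(z) = 0 for every z ∈ Δ. -/

import Mathlib

open Metric Filter

/-- Max principle step: if `Re g ≥ 0` on the ball and vanishes at an interior point,
it vanishes identically. -/
lemma hopf_max_principle (g : ℂ → ℂ)
    (hg : DifferentiableOn ℂ g (ball (0 : ℂ) 1))
    (hpos : ∀ z ∈ ball (0 : ℂ) 1, 0 ≤ (g z).re)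
    (w₀ : ℂ) (hw₀ : w₀ ∈ ball (0 : ℂ) 1) (h0 : (g w₀).re = 0) :
    ∀ w ∈ ball (0 : ℂ) 1, (g w).re = 0 := by
  set f : ℂ → ℂ := fun w => Complex.exp (-g w) with hf
  have hfd : DifferentiableOn ℂ f (ball (0 : ℂ) 1) := (hg.neg).cexp
  have hnorm : ∀ w, ‖f w‖ = Real.exp (-(g w).re) := by
    intro w; simp [hf, Complex.norm_exp]
  have hmax : IsMaxOn (norm ∘ f) (ball (0 : ℂ) 1) w₀ := by
    intro w hw
    simp only [Function.comp_apply, hnorm, h0, neg_zero, Real.exp_zero, Set.mem_setOf_eq]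
    exact Real.exp_le_one_iff.2 (by linarith [hpos w hw])
  have := Complex.eqOn_of_isPreconnected_of_isMaxOn_norm
    (convex_ball (0:ℂ) 1).isPreconnected isOpen_ball hfd hw₀ hmax
  intro w hw
  have heq : f w = f w₀ := this hw
  have : ‖f w‖ = ‖f w₀‖ := by rw [heq]
  rw [hnorm, hnorm, h0, neg_zero, Real.exp_zero, Real.exp_eq_one_iff] at this
  linarith

theorem hopf_lemma_step (g : ℂ → ℂ)
    (hg : DifferentiableOn ℂ g (ball (0 : ℂ) 1))
    (hpos : ∀ z ∈ ball (0 : ℂ) 1, 0 ≤ (g z).re)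
    (z : ℕ → ℂ) (hz : ∀ k, z k ∈ ball (0 : ℂ) 1)
    (hlim : Tendsto z atTop (nhds 1))
    (hnontan : ∃ C > 0, ∀ k, ‖1 - z k‖ ≤ C * (1 - ‖z k‖))
    (hasym : Tendsto (fun k => (g (z k)).re / ‖z k - 1‖) atTop (nhds 0)) :
    ∀ w ∈ ball (0 : ℂ) 1, (g w).re = 0 := by
  by_cases hex : ∃ w₀ ∈ ball (0 : ℂ) 1, (g w₀).re = 0
  · obtain ⟨w₀, hw₀, h0⟩ := hex
    exact hopf_max_principle g hg hpos w₀ hw₀ h0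
  push_neg at hex
  have hposs : ∀ w ∈ ball (0 : ℂ) 1, 0 < (g w).re := fun w hw =>
    lt_of_le_of_ne (hpos w hw) (Ne.symm (hex w hw))
  exfalso
  obtain ⟨C, hC, hCn⟩ := hnontan
  have h0mem : (0 : ℂ) ∈ ball (0 : ℂ) 1 := by simp
  set b : ℂ := g 0 with hb
  have hu0 : 0 < b.re := hposs 0 h0mem
  -- Cayley transform
  set ψ : ℂ → ℂ := fun w => (g w - b) / (g w + (starRingEnd ℂ) b) with hψ
  have hden : ∀ w ∈ ball (0 : ℂ) 1, g w + (starRingEnd ℂ) b ≠ 0 := by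
    intro w hw h
    have : (g w + (starRingEnd ℂ) b).re = (g w).re + b.re := by
      simp [Complex.add_re]
    rw [h] at this
    simp at this
    have := hposs w hw
    linarith
  have hψd : DifferentiableOn ℂ ψ (ball (0 : ℂ) 1) :=
    (hg.sub_const b).div (hg.add_const _) hden
  have hψ0 : ψ 0 = 0 := by simp [hψ, hb]
  have hψmaps : Set.MapsTo ψ (ball (0 : ℂ) 1) (ball (0 : ℂ) 1) := by
    intro w hw
    rw [mem_ball, dist_zero_right]
    rw [hψ, norm_div, div_lt_one (norm_pos_iff.2 (hden w hw))]
    rw [← Real.sqrt_sq (norm_nonneg _), ← Real.sqrt_sq (norm_nonneg (g w + (starRingEnd ℂ) b))]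
    apply Real.sqrt_lt_sqrt (sq_nonneg _)
    have h1 : ‖g w - b‖ ^ 2 = ((g w).re - b.re)^2 + ((g w).im - b.im)^2 := by
      rw [Complex.sq_norm]
      simp [Complex.normSq_apply, Complex.sub_re, Complex.sub_im]; ring
    have h2 : ‖g w + (starRingEnd ℂ) b‖ ^ 2 = ((g w).re + b.re)^2 + ((g w).im - b.im)^2 := by
      rw [Complex.sq_norm]
      simp [Complex.normSq_apply, Complex.add_re, Complex.add_im, Complex.conj_re,
        Complex.conj_im]; ring
    rw [h1, h2]
    nlinarith [hposs w hw, hu0]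
  -- Schwarz lemma
  have schwarz : ∀ k, ‖ψ (z k)‖ ≤ ‖z k‖ := by
    intro k
    have := Complex.dist_le_dist_of_mapsTo_ball_self hψd
      (by rw [hψ0]; exact hψmaps.mono_right ball_subset_closedBall) (hz k)
    simpa [hψ0, dist_zero_right] using this
  -- Harnack-type lower bound: Re g (z k) ≥ b.re * (1 - ‖z k‖) / 4
  have harnack : ∀ k, b.re * (1 - ‖z k‖) ≤ 4 * (g (z k)).re := by
    intro k
    have hr : ‖z k‖ < 1 := by simpa [mem_ball, dist_zero_right] using hz k
    have hr0 : (0:ℝ) ≤ ‖z k‖ := norm_nonneg _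
    have hs := schwarz k
    have hs' : ‖g (z k) - b‖ ≤ ‖z k‖ * ‖g (z k) + (starRingEnd ℂ) b‖ := by
      have hd := norm_pos_iff.2 (hden (z k) (hz k))
      rw [hψ, norm_div, div_le_iff₀ hd] at hs
      exact hs
    have hsq := mul_self_le_mul_self (norm_nonneg _) hs'
    set x := (g (z k)).re
    set y := (g (z k)).im
    have hx : 0 < x := hposs (z k) (hz k)
    have h1 : ‖g (z k) - b‖ * ‖g (z k) - b‖ = (x - b.re)^2 + (y - b.im)^2 := by
      rw [Complex.norm_mul_self_eq_normSq]
      simp [Complex.normSq_apply, Complex.sub_re, Complex.sub_im, x, y]; ring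
    have h2 : ‖g (z k) + (starRingEnd ℂ) b‖ * ‖g (z k) + (starRingEnd ℂ) b‖
        = (x + b.re)^2 + (y - b.im)^2 := by
      rw [Complex.norm_mul_self_eq_normSq]
      simp [Complex.normSq_apply, Complex.add_re, Complex.add_im, Complex.conj_re,
        Complex.conj_im, x, y]; ring
    rw [h1] at hsq
    rw [mul_mul_mul_comm, h2] at hsq
    have h1r : (0:ℝ) ≤ 1 - ‖z k‖ * ‖z k‖ := by nlinarith
    have hstep : (b.re - x)^2 ≤ (‖z k‖ * (x + b.re))^2 := by
      nlinarith [mul_nonneg h1r (sq_nonneg (y - b.im))]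
    have hnn : 0 ≤ ‖z k‖ * (x + b.re) := by positivity
    have hle : b.re - x ≤ ‖z k‖ * (x + b.re) := by
      have h3 := Real.sqrt_le_sqrt hstep
      rw [Real.sqrt_sq_eq_abs, Real.sqrt_sq hnn] at h3
      exact le_trans (le_abs_self _) h3
    nlinarith [mul_nonneg hr0 hx.le]
  -- contradiction with hasym
  have key : ∀ k, b.re / (4 * C) ≤ (g (z k)).re / ‖z k - 1‖ := by
    intro k
    have hr : ‖z k‖ < 1 := by simpa [mem_ball, dist_zero_right] using hz k
    have hzk1 : z k ≠ 1 := by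
      intro h; rw [h] at hr; simp at hr
    have habs : (0:ℝ) < ‖z k - 1‖ := by
      exact norm_pos_iff.2 (sub_ne_zero.2 hzk1)
    have hCn' : ‖z k - 1‖ ≤ C * (1 - ‖z k‖) := by
      have := hCn k
      rwa [← norm_neg, neg_sub] at this
    have h1 : ‖z k - 1‖ / C ≤ 1 - ‖z k‖ := by
      rw [div_le_iff₀ hC]; linarith [hCn']
    have h2 := harnack k
    rw [div_le_div_iff₀ (by positivity) habs]
    calc b.re * ‖z k - 1‖ ≤ b.re * (C * (1 - ‖z k‖)) := by
          apply mul_le_mul_of_nonneg_left hCn' hu0.le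
      _ = C * (b.re * (1 - ‖z k‖)) := by ring
      _ ≤ C * (4 * (g (z k)).re) := by
          apply mul_le_mul_of_nonneg_left h2 hC.le
      _ = (g (z k)).re * (4 * C) := by ring
  have hlt : ∀ᶠ k in atTop, (g (z k)).re / ‖z k - 1‖ < b.re / (4 * C) :=
    hasym.eventually (gt_mem_nhds (by positivity))
  obtain ⟨k, hk⟩ := hlt.exists
  exact absurd (key k) (not_le.2 hk)
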